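/- For every element w of the free group F₂ on two generators there exists a polynomial P_w ∈ ℤ[x, y, z] in three variables such that for all matrices A, B ∈ SL(2,ℝ), tr(w(A,B)) = P_w(tr A, tr B, tr(AB)). (Fricke trace identity: the trace of any word in two SL(2)-matrices is a universal integer polynomial in tr A, tr B, and tr AB.) -/

import Mathlib

open Matrix MvPolynomial

namespace Fricke

abbrev SL2 := Matrix.SpecialLinearGroup (Fin 2) ℝ

lemma detc (A : SL2) : (A : Matrix (Fin 2) (Fin 2) ℝ) 0 0 * (A : Matrix (Fin 2) (Fin 2) ℝ) 1 1
    - (A : Matrix (Fin 2) (Fin 2) ℝ) 0 1 * (A : Matrix (Fin 2) (Fin 2) ℝ) 1 0 = 1 := by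
  have := A.2; rwa [Matrix.det_fin_two] at this

section structureLemmas
variable (A B : SL2)

local notation "M" X => ((X : SL2) : Matrix (Fin 2) (Fin 2) ℝ)

lemma m11 : (M A) * (M A) = trace (M A) • (M A) - 1 := by
  have hA := detc A
  ext i j
  fin_cases i <;> fin_cases j <;>
    simp [Matrix.mul_apply, Matrix.trace_fin_two, Fin.sum_univ_succ] <;>
    first | ring1 | linear_combination -hA

lemma m13 : (M A) * ((M A) * (M B)) = trace (M A) • ((M A) * (M B)) - (M B) := by
  have hA := detc A
  ext i j
  fin_cases i <;> fin_cases j <;>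
    simp [Matrix.mul_apply, Matrix.trace_fin_two, Fin.sum_univ_succ] <;>
    first
    | ring1
    | linear_combination (-(M B) 0 0) * hA
    | linear_combination (-(M B) 0 1) * hA
    | linear_combination (-(M B) 1 0) * hA
    | linear_combination (-(M B) 1 1) * hA

lemma m21 : (M B) * (M A) =
    (trace ((M A) * (M B)) - trace (M A) * trace (M B)) • (1 : Matrix (Fin 2) (Fin 2) ℝ)
      + trace (M B) • (M A) + trace (M A) • (M B) - (M A) * (M B) := by
  ext i j
  fin_cases i <;> fin_cases j <;>
    simp [Matrix.mul_apply, Matrix.trace_fin_two, Fin.sum_univ_succ, Matrix.one_apply] <;>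
    ring1

lemma m22 : (M B) * (M B) = trace (M B) • (M B) - 1 := by
  have hB := detc B
  ext i j
  fin_cases i <;> fin_cases j <;>
    simp [Matrix.mul_apply, Matrix.trace_fin_two, Fin.sum_univ_succ] <;>
    first | ring1 | linear_combination -hB

lemma m23 : (M B) * ((M A) * (M B)) =
    (-trace (M A)) • (1 : Matrix (Fin 2) (Fin 2) ℝ) + (M A) + trace ((M A) * (M B)) • (M B) := by
  have hB := detc B
  ext i j
  fin_cases i <;> fin_cases j <;>
    simp [Matrix.mul_apply, Matrix.trace_fin_two, Fin.sum_univ_succ, Matrix.one_apply] <;>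
    first
    | ring1
    | linear_combination (-(M A) 0 0) * hB
    | linear_combination ((M A) 0 1) * hB
    | linear_combination ((M A) 1 0) * hB
    | linear_combination (-(M A) 1 1) * hB

lemma m31 : ((M A) * (M B)) * (M A) =
    (-trace (M B)) • (1 : Matrix (Fin 2) (Fin 2) ℝ) + trace ((M A) * (M B)) • (M A) + (M B) := by
  have hA := detc A
  ext i j
  fin_cases i <;> fin_cases j <;>
    simp [Matrix.mul_apply, Matrix.trace_fin_two, Fin.sum_univ_succ, Matrix.one_apply] <;>
    first
    | ring1
    | linear_combination (-(M B) 0 0) * hA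
    | linear_combination ((M B) 0 1) * hA
    | linear_combination ((M B) 1 0) * hA
    | linear_combination (-(M B) 1 1) * hA

lemma m32 : ((M A) * (M B)) * (M B) = trace (M B) • ((M A) * (M B)) - (M A) := by
  have hB := detc B
  ext i j
  fin_cases i <;> fin_cases j <;>
    simp [Matrix.mul_apply, Matrix.trace_fin_two, Fin.sum_univ_succ] <;>
    first
    | ring1
    | linear_combination (-(M A) 0 0) * hB
    | linear_combination (-(M A) 0 1) * hB
    | linear_combination (-(M A) 1 0) * hB
    | linear_combination (-(M A) 1 1) * hB

lemma m33 : ((M A) * (M B)) * ((M A) * (M B)) =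
    trace ((M A) * (M B)) • ((M A) * (M B)) - 1 := by
  have hA := detc A
  have hB := detc B
  ext i j
  fin_cases i <;> fin_cases j <;>
    simp [Matrix.mul_apply, Matrix.trace_fin_two, Fin.sum_univ_succ] <;>
    first
    | ring1
    | linear_combination ((M B) 0 1 * (M B) 1 0 - (M B) 0 0 * (M B) 1 1) * hA - hB

lemma minvA : ((A⁻¹ : SL2) : Matrix (Fin 2) (Fin 2) ℝ) =
    trace (M A) • (1 : Matrix (Fin 2) (Fin 2) ℝ) - (M A) := by
  rw [Matrix.SpecialLinearGroup.coe_inv, Matrix.adjugate_fin_two]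
  ext i j
  fin_cases i <;> fin_cases j <;>
    simp [Matrix.trace_fin_two, Matrix.one_apply]

end structureLemmas

noncomputable def tv (A B : SL2) : Fin 3 → ℝ :=
  ![Matrix.trace (A : Matrix (Fin 2) (Fin 2) ℝ),
    Matrix.trace (B : Matrix (Fin 2) (Fin 2) ℝ),
    Matrix.trace ((A * B : SL2) : Matrix (Fin 2) (Fin 2) ℝ)]

@[simp] lemma tv0 (A B : SL2) : tv A B 0 = trace (A : Matrix (Fin 2) (Fin 2) ℝ) := rfl
@[simp] lemma tv1 (A B : SL2) : tv A B 1 = trace (B : Matrix (Fin 2) (Fin 2) ℝ) := rfl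
@[simp] lemma tv2 (A B : SL2) :
    tv A B 2 = trace ((A : Matrix (Fin 2) (Fin 2) ℝ) * (B : Matrix (Fin 2) (Fin 2) ℝ)) := by
  simp [tv]

def Q (w : FreeGroup (Fin 2)) : Prop :=
  ∃ p0 p1 p2 p3 : MvPolynomial (Fin 3) ℤ, ∀ A B : SL2,
    ((FreeGroup.lift ![A, B] w : SL2) : Matrix (Fin 2) (Fin 2) ℝ) =
      aeval (tv A B) p0 • (1 : Matrix (Fin 2) (Fin 2) ℝ)
        + aeval (tv A B) p1 • (A : Matrix (Fin 2) (Fin 2) ℝ)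
        + aeval (tv A B) p2 • (B : Matrix (Fin 2) (Fin 2) ℝ)
        + aeval (tv A B) p3 • ((A : Matrix (Fin 2) (Fin 2) ℝ) * (B : Matrix (Fin 2) (Fin 2) ℝ))

lemma Q_one : Q 1 := ⟨1, 0, 0, 0, fun A B => by simp⟩

lemma Q_of (i : Fin 2) : Q (.of i) := by
  fin_cases i
  · exact ⟨0, 1, 0, 0, fun A B => by simp⟩
  · exact ⟨0, 0, 1, 0, fun A B => by simp⟩

lemma Q_inv_of (i : Fin 2) : Q (.of i)⁻¹ := by
  fin_cases i
  · refine ⟨X 0, -1, 0, 0, fun A B => ?_⟩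
    simp [minvA A, sub_eq_add_neg]
  · refine ⟨X 1, 0, -1, 0, fun A B => ?_⟩
    rw [map_inv]
    simp only [FreeGroup.lift_apply_of]
    show ((((![A,B] 1 : SL2))⁻¹ : SL2) : Matrix (Fin 2) (Fin 2) ℝ) = _
    simp [minvA B, sub_eq_add_neg]

lemma Q_mul {x y : FreeGroup (Fin 2)} (hx : Q x) (hy : Q y) : Q (x * y) := by
  obtain ⟨a0, a1, a2, a3, ha⟩ := hx
  obtain ⟨b0, b1, b2, b3, hb⟩ := hy
  refine ⟨a0*b0 - a1*b1 + (X 2 - X 0 * X 1)*(a2*b1) - a2*b2 - X 0*(a2*b3) - X 1*(a3*b1) - a3*b3,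
          a0*b1 + a1*b0 + X 0*(a1*b1) + X 1*(a2*b1) + a2*b3 + X 2*(a3*b1) - a3*b2,
          a0*b2 - a1*b3 + X 0*(a2*b1) + a2*b0 + X 1*(a2*b2) + X 2*(a2*b3) + a3*b1,
          a0*b3 + a1*b2 + X 0*(a1*b3) - a2*b1 + a3*b0 + X 1*(a3*b2) + X 2*(a3*b3),
          fun A B => ?_⟩
  rw [_root_.map_mul, Matrix.SpecialLinearGroup.coe_mul, ha A B, hb A B]
  simp only [add_mul, mul_add, smul_mul_assoc, mul_smul_comm, smul_smul, one_mul, mul_one]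
  rw [m11 A, m13 A B, m21 A B, m22 B, m23 A B, m31 A B, m32 A B, m33 A B]
  simp only [map_add, map_sub, _root_.map_mul, _root_.map_one, map_neg, aeval_X, tv0, tv1, tv2]
  module

lemma Q_all (w : FreeGroup (Fin 2)) : Q w := by
  induction w using FreeGroup.induction_on with
  | C1 => exact Q_one
  | of i => exact Q_of i
  | inv_of i _ => exact Q_inv_of i
  | mul x y hx hy => exact Q_mul hx hy

end Fricke

/-- Fricke trace identity: for every word `w` in the free group on two generators there is a
universal integer polynomial `P` in three variables such that for all `A B ∈ SL(2,ℝ)`,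
`tr (w(A,B)) = P (tr A, tr B, tr (A*B))`. -/
theorem stmt2 (w : FreeGroup (Fin 2)) :
    ∃ P : MvPolynomial (Fin 3) ℤ,
      ∀ A B : Matrix.SpecialLinearGroup (Fin 2) ℝ,
        Matrix.trace
            (((FreeGroup.lift ![A, B]) w : Matrix.SpecialLinearGroup (Fin 2) ℝ) :
              Matrix (Fin 2) (Fin 2) ℝ) =
          MvPolynomial.aeval
            ![Matrix.trace (A : Matrix (Fin 2) (Fin 2) ℝ),
              Matrix.trace (B : Matrix (Fin 2) (Fin 2) ℝ),
              Matrix.trace ((A * B : Matrix.SpecialLinearGroup (Fin 2) ℝ) :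
                Matrix (Fin 2) (Fin 2) ℝ)] P := by
  obtain ⟨p0, p1, p2, p3, hp⟩ := Fricke.Q_all w
  refine ⟨2 * p0 + MvPolynomial.X 0 * p1 + MvPolynomial.X 1 * p2 + MvPolynomial.X 2 * p3,
    fun A B => ?_⟩
  have h := hp A B
  show _ = MvPolynomial.aeval (Fricke.tv A B) _
  rw [h]
  simp only [Matrix.trace_add, Matrix.trace_smul, Matrix.trace_one, map_add, _root_.map_mul,
    MvPolynomial.aeval_X, map_ofNat, Fricke.tv0, Fricke.tv1, Fricke.tv2, smul_eq_mul,
    Fintype.card_fin]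
  push_cast
  ring
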